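/- For every node v and every nonnegative integer i', the truncation error satisfies π(v) − π_{≥i'}(v) ≤ Σ_{i=0}^{i'-1} (α/n)(1-α)^i Δ_in^i ≤ (α/n) · i' · max{((1-α)Δ_in)^{i'}, 1}, where π_{≥i'}(v) = Σ_{i=i'}^∞ π_i(v). -/

import Mathlib

open Finset MeasureTheory

variable {V : Type*}

/-- Out-neighbors of `u` in the directed graph with adjacency `E`. -/
def outNbrs [Fintype V] (E : V → V → Bool) (u : V) : Finset V :=
  Finset.univ.filter (fun v => E u v)

/-- In-neighbors of `v`. -/
def inNbrs [Fintype V] (E : V → V → Bool) (v : V) : Finset V :=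
  Finset.univ.filter (fun u => E u v)

/-- Out-degree. -/
def dout [Fintype V] (E : V → V → Bool) (u : V) : ℕ := (outNbrs E u).card

/-- In-degree. -/
def din [Fintype V] (E : V → V → Bool) (v : V) : ℕ := (inNbrs E v).card

/-- One-step transition probability of the simple random walk. -/
noncomputable def step [Fintype V] (E : V → V → Bool) (u v : V) : ℝ :=
  if E u v then 1 / (dout E u : ℝ) else 0

/-- Sub-probability that an `α`-discounted random walk started from distribution `μ`
is still alive and located at `v` after `i` steps. -/
noncomputable def alive [Fintype V] (E : V → V → Bool) (α : ℝ) (μ : V → ℝ) : ℕ → V → ℝ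
  | 0 => μ
  | (i+1) => fun v => ∑ u, (1 - α) * step E u v * alive E α μ i u

/-- The uniform distribution on `V`. -/
noncomputable def unif (V : Type*) [Fintype V] : V → ℝ := fun _ => 1 / (Fintype.card V : ℝ)

/-- `i`-hop PageRank: probability that an `α`-discounted walk from a uniformly random
node terminates at `v` after exactly `i` steps. -/
noncomputable def piHop [Fintype V] (E : V → V → Bool) (α : ℝ) (i : ℕ) (v : V) : ℝ :=
  α * alive E α (unif V) i v

/-- PageRank centrality of `v`. -/
noncomputable def pr [Fintype V] (E : V → V → Bool) (α : ℝ) (v : V) : ℝ :=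
  ∑' i : ℕ, piHop E α i v

/-- Personalized PageRank `π(s,v)`: probability an `α`-discounted walk from `s`
terminates at `v`. -/
noncomputable def ppr [Fintype V] [DecidableEq V] (E : V → V → Bool) (α : ℝ) (s v : V) : ℝ :=
  ∑' i : ℕ, α * alive E α (fun w => if w = s then 1 else 0) i v

/-- Distribution of the simple (non-discounted) random walk after `i` steps,
started from distribution `μ`. -/
noncomputable def srw [Fintype V] (E : V → V → Bool) (μ : V → ℝ) : ℕ → V → ℝ
  | 0 => μ
  | (i+1) => fun v => ∑ u, step E u v * srw E μ i u

/-- Truncated-tail PageRank `π_{≥i'}(v) = Σ_{i ≥ i'} π_i(v)`. -/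
noncomputable def prGe [Fintype V] (E : V → V → Bool) (α : ℝ) (i' : ℕ) (v : V) : ℝ :=
  ∑' i : ℕ, piHop E α (i' + i) v

/-- Residues of the deterministic level-wise push process from target `t`. -/
noncomputable def rlev [Fintype V] [DecidableEq V] (E : V → V → Bool) (α : ℝ) (t : V) :
    ℕ → V → ℝ
  | 0 => fun w => if w = t then 1 else 0
  | (i+1) => fun u => ∑ v ∈ outNbrs E u, (1 - α) * rlev E α t i v / (dout E u : ℝ)

lemma step_nonneg' [Fintype V] (E : V → V → Bool) (u v : V) : 0 ≤ step E u v := by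
  unfold step; split <;> positivity

lemma step_le_one' [Fintype V] (E : V → V → Bool) (hout : ∀ u : V, 0 < dout E u) (u v : V) :
    step E u v ≤ 1 := by
  unfold step
  split
  · rw [div_le_one (by exact_mod_cast hout u)]
    exact_mod_cast hout u
  · norm_num

lemma sum_step' [Fintype V] (E : V → V → Bool) (hout : ∀ u : V, 0 < dout E u) (u : V) :
    ∑ v, step E u v = 1 := by
  have h : ∑ v, step E u v = ∑ v ∈ outNbrs E u, 1 / (dout E u : ℝ) := by
    rw [outNbrs, Finset.sum_filter]
    rfl
  rw [h, Finset.sum_const, ← dout, nsmul_eq_mul, mul_one_div, div_self]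
  exact_mod_cast (hout u).ne'

lemma alive_nonneg' [Fintype V] (E : V → V → Bool) (α : ℝ) (hα1 : α ≤ 1)
    (μ : V → ℝ) (hμ : ∀ w, 0 ≤ μ w) : ∀ i v, 0 ≤ alive E α μ i v := by
  intro i
  induction i with
  | zero => exact hμ
  | succ i ih =>
    intro v
    apply Finset.sum_nonneg
    intro u _
    exact mul_nonneg (mul_nonneg (by linarith) (step_nonneg' E u v)) (ih u)

lemma alive_sum' [Fintype V] [Nonempty V] (E : V → V → Bool) (α : ℝ)
    (hout : ∀ u : V, 0 < dout E u) :
    ∀ i, ∑ w, alive E α (unif V) i w = (1 - α) ^ i := by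
  intro i
  induction i with
  | zero =>
    simp only [alive, unif, pow_zero, Finset.sum_const, nsmul_eq_mul]
    have : (Fintype.card V : ℝ) ≠ 0 := by
      exact_mod_cast Fintype.card_ne_zero
    field_simp
    rw [Finset.card_univ]
  | succ i ih =>
    show ∑ w, ∑ u, (1 - α) * step E u w * alive E α (unif V) i u = _
    rw [Finset.sum_comm]
    have : ∀ u : V, ∑ w, (1 - α) * step E u w * alive E α (unif V) i u
        = (1 - α) * alive E α (unif V) i u := by
      intro u
      rw [← Finset.sum_mul, ← Finset.mul_sum, sum_step' E hout u, mul_one]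
    simp_rw [this, ← Finset.mul_sum, ih]
    ring

lemma alive_le' [Fintype V] [Nonempty V] (E : V → V → Bool) (α : ℝ) (hα1 : α ≤ 1)
    (hout : ∀ u : V, 0 < dout E u) (Δin : ℕ) (hΔ : ∀ w : V, din E w ≤ Δin) :
    ∀ i v, alive E α (unif V) i v ≤
      (1 / (Fintype.card V : ℝ)) * ((1 - α) * (Δin : ℝ)) ^ i := by
  intro i
  induction i with
  | zero => intro v; simp [alive, unif]
  | succ i ih =>
    intro v
    have hB : (0:ℝ) ≤ (1 / (Fintype.card V : ℝ)) * ((1 - α) * (Δin : ℝ)) ^ i := by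
      have hn : (0:ℝ) < (Fintype.card V : ℝ) := by exact_mod_cast Fintype.card_pos
      have h1 : (0:ℝ) ≤ (1 - α) * (Δin : ℝ) := mul_nonneg (by linarith) (by positivity)
      exact mul_nonneg (by positivity) (pow_nonneg h1 i)
    have key : ∀ u : V, (1 - α) * step E u v * alive E α (unif V) i u ≤
        (if E u v then (1 - α) * ((1 / (Fintype.card V : ℝ)) * ((1 - α) * (Δin : ℝ)) ^ i)
         else 0) := by
      intro u
      by_cases h : E u v
      · simp only [h, if_true]
        have hs : step E u v ≤ 1 := step_le_one' E hout u v
        have hs0 : 0 ≤ step E u v := step_nonneg' E u v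
        have ha := alive_nonneg' E α hα1 (unif V) (fun w => by
          have : (0:ℝ) < (Fintype.card V : ℝ) := by exact_mod_cast Fintype.card_pos
          unfold unif; positivity) i u
        have hb := ih u
        have h2 : step E u v * alive E α (unif V) i u ≤
            1 * ((1 / (Fintype.card V : ℝ)) * ((1 - α) * (Δin : ℝ)) ^ i) :=
          mul_le_mul hs hb ha zero_le_one
        rw [one_mul] at h2
        calc (1 - α) * step E u v * alive E α (unif V) i u
            = (1 - α) * (step E u v * alive E α (unif V) i u) := by ring
          _ ≤ (1 - α) * ((1 / (Fintype.card V : ℝ)) * ((1 - α) * (Δin : ℝ)) ^ i) :=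
            mul_le_mul_of_nonneg_left h2 (by linarith)
      · simp only [h, if_false]
        unfold step
        simp [h]
    calc alive E α (unif V) (i+1) v = ∑ u, (1 - α) * step E u v * alive E α (unif V) i u := rfl
      _ ≤ ∑ u, (if E u v then (1 - α) * ((1 / (Fintype.card V : ℝ)) * ((1 - α) * (Δin : ℝ)) ^ i) else 0) :=
          Finset.sum_le_sum (fun u _ => key u)
      _ = (din E v : ℝ) * ((1 - α) * ((1 / (Fintype.card V : ℝ)) * ((1 - α) * (Δin : ℝ)) ^ i)) := by
          rw [Finset.sum_ite, Finset.sum_const_zero, add_zero, Finset.sum_const,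
            nsmul_eq_mul]
          simp [din, inNbrs]
      _ ≤ (Δin : ℝ) * ((1 - α) * ((1 / (Fintype.card V : ℝ)) * ((1 - α) * (Δin : ℝ)) ^ i)) := by
          apply mul_le_mul_of_nonneg_right
          · exact_mod_cast hΔ v
          · nlinarith
      _ = (1 / (Fintype.card V : ℝ)) * ((1 - α) * (Δin : ℝ)) ^ (i+1) := by ring

lemma piHop_summable' [Fintype V] [Nonempty V] (E : V → V → Bool) (α : ℝ)
    (hα0 : 0 < α) (hα1 : α < 1) (hout : ∀ u : V, 0 < dout E u) (v : V) :
    Summable (fun i => piHop E α i v) := by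
  apply Summable.of_nonneg_of_le
    (fun i => by
      have := alive_nonneg' E α hα1.le (unif V) (fun w => by
        have : (0:ℝ) < (Fintype.card V : ℝ) := by exact_mod_cast Fintype.card_pos
        unfold unif; positivity) i v
      unfold piHop; positivity)
    (fun i => ?_)
    (((summable_geometric_of_lt_one (show (0:ℝ) ≤ 1 - α by linarith) (by linarith)).mul_left α))
  unfold piHop
  have h1 : alive E α (unif V) i v ≤ ∑ w, alive E α (unif V) i w :=
    Finset.single_le_sum (fun w _ => alive_nonneg' E α hα1.le (unif V) (fun w => by
        have : (0:ℝ) < (Fintype.card V : ℝ) := by exact_mod_cast Fintype.card_pos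
        unfold unif; positivity) i w) (Finset.mem_univ v)
  rw [alive_sum' E α hout i] at h1
  exact mul_le_mul_of_nonneg_left h1 hα0.le

theorem truncation_error_bound [Fintype V] [Nonempty V]
    (E : V → V → Bool) (α : ℝ) (hα0 : 0 < α) (hα1 : α < 1)
    (hout : ∀ u : V, 0 < dout E u)
    (Δin : ℕ) (hΔ : ∀ w : V, din E w ≤ Δin) (i' : ℕ) (v : V) :
    pr E α v - prGe E α i' v ≤
      ∑ i ∈ Finset.range i',
        (α / (Fintype.card V : ℝ)) * (1 - α) ^ i * (Δin : ℝ) ^ i ∧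
    ∑ i ∈ Finset.range i',
        (α / (Fintype.card V : ℝ)) * (1 - α) ^ i * (Δin : ℝ) ^ i ≤
      (α / (Fintype.card V : ℝ)) * (i' : ℝ) *
        max (((1 - α) * (Δin : ℝ)) ^ i') 1 := by
  have hn : (0:ℝ) < (Fintype.card V : ℝ) := by exact_mod_cast Fintype.card_pos
  have hsum := piHop_summable' E α hα0 hα1 hout v
  constructor
  · have hsplit : ∑ i ∈ Finset.range i', piHop E α i v + ∑' i, piHop E α (i + i') v
        = ∑' i, piHop E α i v := Summable.sum_add_tsum_nat_add i' hsum
    have hGe : prGe E α i' v = ∑' i, piHop E α (i + i') v := by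
      unfold prGe
      exact tsum_congr (fun i => by rw [add_comm])
    have hdiff : pr E α v - prGe E α i' v = ∑ i ∈ Finset.range i', piHop E α i v := by
      unfold pr
      rw [hGe, ← hsplit]; ring
    rw [hdiff]
    apply Finset.sum_le_sum
    intro i _
    have := alive_le' E α hα1.le hout Δin hΔ i v
    calc piHop E α i v = α * alive E α (unif V) i v := rfl
      _ ≤ α * ((1 / (Fintype.card V : ℝ)) * ((1 - α) * (Δin : ℝ)) ^ i) := by nlinarith
      _ = (α / (Fintype.card V : ℝ)) * (1 - α) ^ i * (Δin : ℝ) ^ i := by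
          rw [mul_pow]; ring
  · have hterm : ∀ i ∈ Finset.range i',
        (α / (Fintype.card V : ℝ)) * (1 - α) ^ i * (Δin : ℝ) ^ i ≤
        (α / (Fintype.card V : ℝ)) * max (((1 - α) * (Δin : ℝ)) ^ i') 1 := by
      intro i hi
      rw [Finset.mem_range] at hi
      have hB0 : (0:ℝ) ≤ (1 - α) * (Δin : ℝ) := mul_nonneg (by linarith) (by positivity)
      have hpow : ((1 - α) * (Δin : ℝ)) ^ i ≤ max (((1 - α) * (Δin : ℝ)) ^ i') 1 := by
        rcases le_or_gt ((1 - α) * (Δin : ℝ)) 1 with h | h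
        · exact le_trans (pow_le_one₀ hB0 h) (le_max_right _ _)
        · exact le_trans (pow_le_pow_right₀ h.le hi.le) (le_max_left _ _)
      calc (α / (Fintype.card V : ℝ)) * (1 - α) ^ i * (Δin : ℝ) ^ i
          = (α / (Fintype.card V : ℝ)) * ((1 - α) * (Δin : ℝ)) ^ i := by
            rw [mul_pow]; ring
        _ ≤ (α / (Fintype.card V : ℝ)) * max (((1 - α) * (Δin : ℝ)) ^ i') 1 := by
            apply mul_le_mul_of_nonneg_left hpow; positivity
    calc ∑ i ∈ Finset.range i', (α / (Fintype.card V : ℝ)) * (1 - α) ^ i * (Δin : ℝ) ^ i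
        ≤ ∑ _i ∈ Finset.range i',
            (α / (Fintype.card V : ℝ)) * max (((1 - α) * (Δin : ℝ)) ^ i') 1 :=
          Finset.sum_le_sum hterm
      _ = (α / (Fintype.card V : ℝ)) * (i' : ℝ) * max (((1 - α) * (Δin : ℝ)) ^ i') 1 := by
          rw [Finset.sum_const, Finset.card_range, nsmul_eq_mul]; ring
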